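/- Let m, n, r be positive integers with 2r ≤ min(m,n) and let G ∈ ℝ^{m×n} have singular values σ_1 ≥ σ_2 ≥ …. Then the minimum over all ΔW ∈ M_r of ‖G − P_{T_{ΔW} M_r} G‖_F² equals Σ_{i>2r} σ_i², and equivalently the maximum over all ΔW ∈ M_r of ‖P_{T_{ΔW} M_r} G‖_F² equals σ_1² + … + σ_{2r}². -/

import Mathlib

open Matrix
open scoped BigOperators

noncomputable section

/-- Squared Frobenius norm `‖Y‖_F² = tr(Yᵀ Y)`. -/
def frobSq {m n : ℕ} (Y : Matrix (Fin m) (Fin n) ℝ) : ℝ := (Yᵀ * Y).trace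

/-- Frobenius inner product `⟨Y, Z⟩ = tr(Yᵀ Z)`. -/
def frobInner {m n : ℕ} (Y Z : Matrix (Fin m) (Fin n) ℝ) : ℝ := (Yᵀ * Z).trace

/-- The fixed-rank manifold `M_r`: real `m×n` matrices of rank exactly `r`. -/
def Mrank (m n r : ℕ) : Set (Matrix (Fin m) (Fin n) ℝ) := {X | X.rank = r}

/-- The tangent space of `M_r` at a point `X = A_L Bᵀ = A B_Rᵀ` (with `A_L, B_R` having
orthonormal columns): `{Ȧ B_Rᵀ + A_L Ḃᵀ : A_Lᵀ Ȧ = 0}`. -/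
def tangentSet {m n r : ℕ} (AL : Matrix (Fin m) (Fin r) ℝ) (BR : Matrix (Fin n) (Fin r) ℝ) :
    Set (Matrix (Fin m) (Fin n) ℝ) :=
  {ξ | ∃ Ad : Matrix (Fin m) (Fin r) ℝ, ∃ Bd : Matrix (Fin n) (Fin r) ℝ,
    ALᵀ * Ad = 0 ∧ ξ = Ad * BRᵀ + AL * Bdᵀ}

/-- `(A_L, B_R)` is an orthonormal-factor pair for `X`: both have orthonormal columns and
`X = A_L Bᵀ = A B_Rᵀ` for some `B`, `A`. -/
def IsONFact {m n r : ℕ} (X : Matrix (Fin m) (Fin n) ℝ)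
    (AL : Matrix (Fin m) (Fin r) ℝ) (BR : Matrix (Fin n) (Fin r) ℝ) : Prop :=
  ALᵀ * AL = 1 ∧ BRᵀ * BR = 1 ∧
  (∃ B : Matrix (Fin n) (Fin r) ℝ, X = AL * Bᵀ) ∧
  (∃ A : Matrix (Fin m) (Fin r) ℝ, X = A * BRᵀ)

/-- The orthogonal projection (w.r.t. the Frobenius inner product) onto the tangent space
determined by `(A_L, B_R)`: `P Z = Z - (I - A_L A_Lᵀ) Z (I - B_R B_Rᵀ)`. -/
def projT {m n r : ℕ} (AL : Matrix (Fin m) (Fin r) ℝ) (BR : Matrix (Fin n) (Fin r) ℝ)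
    (Z : Matrix (Fin m) (Fin n) ℝ) : Matrix (Fin m) (Fin n) ℝ :=
  Z - (1 - AL * ALᵀ) * Z * (1 - BR * BRᵀ)

/-- Column block `U[:, off : off + r]` of a matrix `U`. -/
def colBlock {m k : ℕ} (U : Matrix (Fin m) (Fin k) ℝ) (off r : ℕ) (h : off + r ≤ k) :
    Matrix (Fin m) (Fin r) ℝ :=
  fun i j => U i ⟨off + (j : ℕ), by omega⟩

/-- The rectangular diagonal matrix of singular values. -/
def svdDiag (m n : ℕ) (σ : ℕ → ℝ) : Matrix (Fin m) (Fin n) ℝ :=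
  fun i j => if (i : ℕ) = (j : ℕ) then σ (i : ℕ) else 0


section AuxTPX
open Module Submodule


lemma frobInner_eq_sum {m n : ℕ} (Y Z : Matrix (Fin m) (Fin n) ℝ) :
    frobInner Y Z = ∑ j : Fin n, ∑ i : Fin m, Y i j * Z i j := by
  simp [frobInner, Matrix.trace, Matrix.diag, Matrix.mul_apply, Matrix.transpose_apply]

lemma frobSq_eq_sum {m n : ℕ} (Y : Matrix (Fin m) (Fin n) ℝ) :
    frobSq Y = ∑ j : Fin n, ∑ i : Fin m, Y i j ^ 2 := by
  have : frobSq Y = frobInner Y Y := rfl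
  rw [this, frobInner_eq_sum]
  simp [sq]

lemma frobSq_nonneg {m n : ℕ} (Y : Matrix (Fin m) (Fin n) ℝ) : 0 ≤ frobSq Y := by
  rw [frobSq_eq_sum]
  positivity

lemma frobInner_sq_le {m n : ℕ} (Y Z : Matrix (Fin m) (Fin n) ℝ) :
    (frobInner Y Z) ^ 2 ≤ frobSq Y * frobSq Z := by
  have h := Finset.sum_mul_sq_le_sq_mul_sq (Finset.univ : Finset (Fin n × Fin m))
    (fun p => Y p.2 p.1) (fun p => Z p.2 p.1)
  rw [frobInner_eq_sum, frobSq_eq_sum, frobSq_eq_sum]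
  simpa [Fintype.sum_prod_type] using h

lemma frobSq_sub {m n : ℕ} (Y Z : Matrix (Fin m) (Fin n) ℝ) :
    frobSq (Y - Z) = frobSq Y - 2 * frobInner Y Z + frobSq Z := by
  rw [frobSq_eq_sum, frobSq_eq_sum, frobSq_eq_sum, frobInner_eq_sum]
  rw [Finset.mul_sum, ← Finset.sum_sub_distrib, ← Finset.sum_add_distrib]
  refine Finset.sum_congr rfl fun j _ => ?_
  rw [Finset.mul_sum, ← Finset.sum_sub_distrib, ← Finset.sum_add_distrib]
  refine Finset.sum_congr rfl fun i _ => ?_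
  simp [Matrix.sub_apply]; ring


lemma ctrick {k M : ℕ} (hk : 0 < k) (hkM : k ≤ M) (a c : ℕ → ℝ)
    (ha0 : ∀ i, 0 ≤ a i) (hamono : ∀ i j, i ≤ j → a j ≤ a i)
    (hc0 : ∀ i, 0 ≤ c i) (hc1 : ∀ i, c i ≤ 1)
    (hsum : ∑ i ∈ Finset.range M, c i ≤ k) :
    ∑ i ∈ Finset.range M, c i * a i ≤ ∑ i ∈ Finset.range k, a i := by
  set t := a (k - 1) with ht
  have ht0 : 0 ≤ t := ha0 _
  have key : ∑ i ∈ Finset.range M, c i * (a i - t) ≤ ∑ i ∈ Finset.range k, (a i - t) := by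
    have h1 : ∑ i ∈ Finset.range k, c i * (a i - t) ≤ ∑ i ∈ Finset.range k, (a i - t) := by
      refine Finset.sum_le_sum fun i hi => ?_
      have hit : t ≤ a i := hamono i (k-1) (by have := Finset.mem_range.mp hi; omega)
      have h01 : 0 ≤ a i - t := by linarith
      nlinarith [hc1 i]
    have h2 : ∑ i ∈ Finset.Ico k M, c i * (a i - t) ≤ 0 := by
      refine Finset.sum_nonpos fun i hi => ?_
      have : a i ≤ t := hamono (k-1) i (by
        have := (Finset.mem_Ico.mp hi).1; omega)
      have := hc0 i
      nlinarith
    have hsplit := Finset.sum_range_add_sum_Ico (fun i => c i * (a i - t)) hkM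
    linarith
  have expand : ∑ i ∈ Finset.range M, c i * a i
      = ∑ i ∈ Finset.range M, c i * (a i - t) + t * ∑ i ∈ Finset.range M, c i := by
    rw [Finset.mul_sum, ← Finset.sum_add_distrib]
    exact Finset.sum_congr rfl fun i _ => by ring
  have expand2 : ∑ i ∈ Finset.range k, a i
      = ∑ i ∈ Finset.range k, (a i - t) + t * k := by
    rw [Finset.sum_sub_distrib]
    simp; ring
  rw [expand, expand2]
  have : t * ∑ i ∈ Finset.range M, c i ≤ t * k := by
    exact mul_le_mul_of_nonneg_left hsum ht0
  linarith



lemma exists_ortho_ext {m : ℕ} {ι : Type*} [Fintype ι] [DecidableEq ι]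
    (h : Fintype.card ι ≤ m) (C : Matrix (Fin m) ι ℝ) :
    ∃ Q : Matrix (Fin m) ι ℝ, Qᵀ * Q = 1 ∧ Q * Qᵀ * C = C := by
  classical
  let E := EuclideanSpace ℝ (Fin m)
  let col : ι → E := fun j => WithLp.toLp 2 (fun i => C i j : Fin m → ℝ)
  let W : Submodule ℝ E := Submodule.span ℝ (Set.range col)
  let d := Module.finrank ℝ W
  have hdι : d ≤ Fintype.card ι := finrank_range_le_card col
  have hdm : d ≤ m := hdι.trans h
  let b : OrthonormalBasis (Fin d) ℝ W := stdOrthonormalBasis ℝ W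
  let v : Fin m → E := fun i => if hi : (i : ℕ) < d then (b ⟨i, hi⟩ : E) else 0
  have hcard : Module.finrank ℝ E = Fintype.card (Fin m) := by
    simp [E, finrank_euclideanSpace]
  set s : Set (Fin m) := {i : Fin m | (i : ℕ) < d} with hs
  have hv : Orthonormal ℝ (s.restrict v) := by
    rw [orthonormal_iff_ite]
    rintro ⟨i, hi⟩ ⟨j, hj⟩
    have hi' : (i : ℕ) < d := hi
    have hj' : (j : ℕ) < d := hj
    have : s.restrict v ⟨i, hi⟩ = (b ⟨i, hi'⟩ : E) := by
      simp [v, Set.restrict, hi']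
    rw [this]
    have : s.restrict v ⟨j, hj⟩ = (b ⟨j, hj'⟩ : E) := by
      simp [v, Set.restrict, hj']
    rw [this]
    have hb := orthonormal_iff_ite.mp b.orthonormal ⟨i, hi'⟩ ⟨j, hj'⟩
    rw [Submodule.coe_inner] at hb
    rw [hb]
    congr 1
    simp [Fin.ext_iff, Subtype.ext_iff]
  obtain ⟨β, hβ⟩ := hv.exists_orthonormalBasis_extension_of_card_eq hcard
  let e := Fintype.equivFin ι
  let f : ι → Fin m := fun j => Fin.castLE h (e j)
  have hfinj : Function.Injective f := fun a b hab => e.injective (Fin.castLE_injective h hab)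
  let Q : Matrix (Fin m) ι ℝ := fun i j => β (f j) i
  have hβo := orthonormal_iff_ite.mp β.orthonormal
  have hinner : ∀ a c : Fin m, ∑ i, β a i * β c i = if a = c then 1 else 0 := by
    intro a c
    have := hβo a c
    rw [PiLp.inner_apply] at this
    simpa [mul_comm, PiLp.inner_apply, RCLike.inner_apply, starRingEnd_apply] using this
  have hQ1 : Qᵀ * Q = 1 := by
    ext j j'
    rw [Matrix.mul_apply, Matrix.one_apply]
    simp only [Matrix.transpose_apply]
    rw [hinner (f j) (f j')]
    simp [hfinj.eq_iff]
  refine ⟨Q, hQ1, ?_⟩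
  -- fixed-point property on span of columns of Q
  have hQQ : Q * Qᵀ * Q = Q := by rw [Matrix.mul_assoc, hQ1, Matrix.mul_one]
  let colQ : ι → E := fun j => WithLp.toLp 2 (fun i => Q i j : Fin m → ℝ)
  have hfixQ : ∀ j : ι, (Q * Qᵀ) *ᵥ (colQ j) = colQ j := by
    intro j
    funext i
    have : ((Q * Qᵀ) *ᵥ (colQ j)) i = (Q * Qᵀ * Q) i j := by
      rw [Matrix.mul_apply, Matrix.mulVec, dotProduct]
    rw [this, hQQ]
  have hfix : ∀ x : E, x ∈ Submodule.span ℝ (Set.range colQ) →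
      (Q * Qᵀ) *ᵥ (x : Fin m → ℝ) = x := by
    intro x hx
    induction hx using Submodule.span_induction with
    | mem y hy => obtain ⟨j, rfl⟩ := hy; exact hfixQ j
    | zero => simp [Matrix.mulVec_zero]
    | add y z _ _ hy hz =>
        have h' : ((y + z : E) : Fin m → ℝ) = (y : Fin m → ℝ) + z := rfl
        rw [h', Matrix.mulVec_add, hy, hz]
    | smul a y _ hy =>
        have h' : ((a • y : E) : Fin m → ℝ) = a • (y : Fin m → ℝ) := rfl
        rw [h', Matrix.mulVec_smul, hy]
  -- W ≤ span colQ
  have hbt : ∀ t : Fin d, (b t : E) ∈ Set.range colQ := by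
    intro t
    refine ⟨e.symm (Fin.castLE hdι t), ?_⟩
    have hf : f (e.symm (Fin.castLE hdι t)) = Fin.castLE hdm t := by
      simp [f, Fin.ext_iff]
    apply PiLp.ext; intro i
    show β (f (e.symm (Fin.castLE hdι t))) i = (b t : E) i
    rw [hf]
    have ht : (Fin.castLE hdm t : Fin m) ∈ s := t.isLt
    rw [hβ _ ht]
    simp only [v]
    rw [dif_pos (show ((Fin.castLE hdm t : Fin m) : ℕ) < d from t.isLt)]
    rfl
  have hWle : W ≤ Submodule.span ℝ (Set.range colQ) := by
    intro x hx
    have hxr : (x : E) = ∑ t, b.repr ⟨x, hx⟩ t • (b t : E) := by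
      have h1 := b.sum_repr ⟨x, hx⟩
      have := congrArg (Submodule.subtype W) h1
      simpa using this.symm
    rw [hxr]
    exact Submodule.sum_mem _ fun t _ =>
      Submodule.smul_mem _ _ (Submodule.subset_span (hbt t))
  -- conclude
  ext i j
  have hcj : col j ∈ W := Submodule.subset_span ⟨j, rfl⟩
  have hfx := congrFun (hfix (col j) (hWle hcj)) i
  have lhs : (Q * Qᵀ * C) i j = ((Q * Qᵀ) *ᵥ (col j : Fin m → ℝ)) i := by
    rw [Matrix.mul_apply]
    rfl
  rw [lhs]
  exact hfx




lemma PA_idem {m : ℕ} {ι : Type*} [Fintype ι] [DecidableEq ι]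
    (AL : Matrix (Fin m) ι ℝ) (hAL : ALᵀ * AL = 1) :
    (AL * ALᵀ) * (AL * ALᵀ) = AL * ALᵀ := by
  rw [Matrix.mul_assoc, ← Matrix.mul_assoc ALᵀ, hAL, Matrix.one_mul]

lemma projT_eq {m n r : ℕ} (AL : Matrix (Fin m) (Fin r) ℝ) (BR : Matrix (Fin n) (Fin r) ℝ)
    (G : Matrix (Fin m) (Fin n) ℝ) :
    projT AL BR G = AL * ALᵀ * G + (1 - AL * ALᵀ) * G * (BR * BRᵀ) := by
  unfold projT
  simp only [Matrix.mul_sub, Matrix.sub_mul, Matrix.mul_one, Matrix.one_mul, Matrix.mul_assoc]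
  abel

lemma frobInner_projT {m n r : ℕ} (AL : Matrix (Fin m) (Fin r) ℝ) (BR : Matrix (Fin n) (Fin r) ℝ)
    (G : Matrix (Fin m) (Fin n) ℝ) (hAL : ALᵀ * AL = 1) (hBR : BRᵀ * BR = 1) :
    frobInner G (projT AL BR G) = frobSq (projT AL BR G) := by
  set PA := AL * ALᵀ with hPA
  set PB := BR * BRᵀ with hPB
  have hPAi : PA * PA = PA := PA_idem AL hAL
  have hPBi : PB * PB = PB := PA_idem BR hBR
  have hPAs : PAᵀ = PA := by rw [hPA, Matrix.transpose_mul, Matrix.transpose_transpose]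
  have hPBs : PBᵀ = PB := by rw [hPB, Matrix.transpose_mul, Matrix.transpose_transpose]
  set P := projT AL BR G with hP
  set R := (1 - PA) * G * (1 - PB) with hR
  have hGP : G - P = R := by rw [hP]; unfold projT; rw [← hPA, ← hPB]; abel
  have hRT : Rᵀ = (1 - PB) * Gᵀ * (1 - PA) := by
    simp only [hR, Matrix.transpose_mul, Matrix.transpose_sub, Matrix.transpose_one,
      hPAs, hPBs, Matrix.mul_assoc]
  have hPdecomp : P = PA * G + (1 - PA) * G * PB := by
    rw [hP, projT_eq]
  have h1 : Rᵀ * (PA * G) = 0 := by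
    have hz : (1 - PA) * PA = 0 := by
      rw [Matrix.sub_mul, Matrix.one_mul, hPAi, sub_self]
    have : Rᵀ * (PA * G) = (1 - PB) * Gᵀ * ((1 - PA) * PA) * G := by
      rw [hRT]; simp only [Matrix.mul_assoc]
    rw [this, hz, Matrix.mul_zero, Matrix.zero_mul]
  have h2 : PB * Rᵀ = 0 := by
    have hz : PB * (1 - PB) = 0 := by
      rw [Matrix.mul_sub, Matrix.mul_one, hPBi, sub_self]
    have : PB * Rᵀ = (PB * (1 - PB)) * (Gᵀ * (1 - PA)) := by
      rw [hRT]; simp only [Matrix.mul_assoc]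
    rw [this, hz, Matrix.zero_mul]
  have hRP : frobInner R P = 0 := by
    unfold frobInner
    rw [hPdecomp, Matrix.mul_add, Matrix.trace_add, h1, Matrix.trace_zero]
    have : Rᵀ * ((1 - PA) * G * PB) = (Rᵀ * ((1 - PA) * G)) * PB := by
      simp only [Matrix.mul_assoc]
    rw [this, Matrix.trace_mul_comm, ← Matrix.mul_assoc, h2, Matrix.zero_mul,
      Matrix.trace_zero, add_zero]
  have hexp : frobInner (G - P) P = frobInner G P - frobSq P := by
    unfold frobInner frobSq
    rw [Matrix.transpose_sub, Matrix.sub_mul, Matrix.trace_sub]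
  rw [hGP] at hexp
  rw [hRP] at hexp
  linarith


lemma svdDiag_mul_t {m n : ℕ} (σ : ℕ → ℝ) (hσzero : ∀ i, min m n ≤ i → σ i = 0) :
    svdDiag m n σ * (svdDiag m n σ)ᵀ = Matrix.diagonal (fun i : Fin m => σ (i : ℕ) ^ 2) := by
  ext i i'
  rw [Matrix.mul_apply, Matrix.diagonal_apply]
  simp only [svdDiag, Matrix.transpose_apply]
  by_cases hii : i = i'
  · subst hii
    rw [if_pos rfl]
    by_cases him : (i : ℕ) < n
    · rw [Finset.sum_eq_single (⟨(i : ℕ), him⟩ : Fin n)]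
      · simp [sq]
      · intro b _ hb
        have hbne : (i : ℕ) ≠ (b : ℕ) := by
          intro hc; exact hb (Fin.ext hc.symm)
        simp [hbne]
      · intro h; exact absurd (Finset.mem_univ _) h
    · have hz : σ (i : ℕ) = 0 := hσzero _ (le_trans (min_le_right m n) (le_of_not_gt him))
      have hne : ∀ j : Fin n, (i : ℕ) ≠ (j : ℕ) := fun j => by have := j.isLt; omega
      simp [hne, hz]
  · rw [if_neg hii]
    refine Finset.sum_eq_zero fun j _ => ?_
    by_cases h1 : (i : ℕ) = (j : ℕ)
    · have h2 : (i' : ℕ) ≠ (j : ℕ) := by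
        intro hc; exact hii (Fin.ext (h1.trans hc.symm))
      simp [h2]
    · simp [h1]

lemma trace_diagonal_mul {m : ℕ} (f : Fin m → ℝ) (S : Matrix (Fin m) (Fin m) ℝ) :
    (Matrix.diagonal f * S).trace = ∑ i, f i * S i i := by
  simp [Matrix.trace, Matrix.diag, Matrix.diagonal_mul]


set_option maxHeartbeats 1000000 in
lemma kyfan_bound {m n r : ℕ} (hr : 0 < r) (h2r : 2 * r ≤ min m n)
    (U : Matrix (Fin m) (Fin m) ℝ) (V : Matrix (Fin n) (Fin n) ℝ) (σ : ℕ → ℝ)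
    (hU : Uᵀ * U = 1) (hV : Vᵀ * V = 1)
    (hσmono : ∀ i j : ℕ, i ≤ j → σ j ≤ σ i) (hσnonneg : ∀ i, 0 ≤ σ i)
    (hσzero : ∀ i, min m n ≤ i → σ i = 0)
    (AL : Matrix (Fin m) (Fin r) ℝ) (BR : Matrix (Fin n) (Fin r) ℝ)
    (hAL : ALᵀ * AL = 1) (hBR : BRᵀ * BR = 1) :
    frobSq (projT AL BR (U * svdDiag m n σ * Vᵀ)) ≤ ∑ i ∈ Finset.range (2 * r), σ i ^ 2 := by
  set D := svdDiag m n σ with hD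
  set G := U * D * Vᵀ with hG
  set P := projT AL BR G with hPdef
  set S := ∑ i ∈ Finset.range (2 * r), σ i ^ 2 with hSdef
  have hSnn : 0 ≤ S := Finset.sum_nonneg fun i _ => sq_nonneg _
  set C0 : Matrix (Fin m) (Fin r ⊕ Fin r) ℝ :=
    Matrix.fromCols AL ((1 - AL * ALᵀ) * G * BR) with hC0
  set R0 : Matrix (Fin r ⊕ Fin r) (Fin n) ℝ := Matrix.fromRows (ALᵀ * G) BRᵀ with hR0
  have hPfact : P = C0 * R0 := by
    rw [hPdef, projT_eq, hC0, hR0, Matrix.fromCols_mul_fromRows]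
    simp only [Matrix.mul_assoc]
  have hcard : Fintype.card (Fin r ⊕ Fin r) ≤ m := by
    have h' : 2 * r ≤ m := le_trans h2r (min_le_left m n)
    rw [Fintype.card_sum, Fintype.card_fin]
    omega
  obtain ⟨Q, hQ1, hQC⟩ := exists_ortho_ext hcard C0
  have hQP : Q * Qᵀ * P = P := by
    rw [hPfact, ← Matrix.mul_assoc (Q * Qᵀ) C0 R0, hQC]
  have horth : frobInner G P = frobSq P := frobInner_projT AL BR G hAL hBR
  have hQQT : (Q * Qᵀ)ᵀ = Q * Qᵀ := by
    rw [Matrix.transpose_mul, Matrix.transpose_transpose]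
  have key2 : frobInner (Q * Qᵀ * G) P = frobSq P := by
    unfold frobInner
    rw [Matrix.transpose_mul, hQQT, Matrix.mul_assoc, hQP]
    exact horth
  -- orthogonal invariance
  have hUUT : U * Uᵀ = 1 := mul_eq_one_comm.mp hU
  have hleft : ∀ (Y : Matrix (Fin r ⊕ Fin r) (Fin n) ℝ), frobSq (Q * Y) = (Yᵀ * Y).trace := by
    intro Y
    unfold frobSq
    rw [Matrix.transpose_mul, Matrix.mul_assoc, ← Matrix.mul_assoc Qᵀ Q Y, hQ1, Matrix.one_mul]
  have hright : ∀ (T : Matrix (Fin r ⊕ Fin r) (Fin n) ℝ),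
      (((T * Vᵀ)ᵀ) * (T * Vᵀ)).trace = (Tᵀ * T).trace := by
    intro T
    rw [Matrix.transpose_mul, Matrix.transpose_transpose, Matrix.trace_mul_comm,
      Matrix.mul_assoc, ← Matrix.mul_assoc Vᵀ V Tᵀ, hV, Matrix.one_mul,
      Matrix.trace_mul_comm]
  set W' := Uᵀ * Q with hW'
  have hWW : W'ᵀ * W' = 1 := by
    rw [hW', Matrix.transpose_mul, Matrix.transpose_transpose, Matrix.mul_assoc,
      ← Matrix.mul_assoc U Uᵀ Q, hUUT, Matrix.one_mul, hQ1]
  have e0 : Q * Qᵀ * G = Q * ((W'ᵀ * D) * Vᵀ) := by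
    rw [hG, hW']
    simp only [Matrix.transpose_mul, Matrix.transpose_transpose, Matrix.mul_assoc]
  have e1 : frobSq (Q * Qᵀ * G) = ((W'ᵀ * D)ᵀ * (W'ᵀ * D)).trace := by
    rw [e0, hleft, hright]
  set PS := W' * W'ᵀ with hPS
  have e2 : ((W'ᵀ * D)ᵀ * (W'ᵀ * D)).trace
      = ((Matrix.diagonal fun i : Fin m => σ (i : ℕ) ^ 2) * PS).trace := by
    rw [Matrix.transpose_mul, Matrix.transpose_transpose, Matrix.trace_mul_comm,
      Matrix.mul_assoc, ← Matrix.mul_assoc D Dᵀ W', Matrix.trace_mul_comm,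
      Matrix.mul_assoc, hD, svdDiag_mul_t σ hσzero, hPS, ← Matrix.mul_assoc]
  have hPSidem : PS * PS = PS := by rw [hPS]; exact PA_idem W' hWW
  have hPSsym : PSᵀ = PS := by
    rw [hPS, Matrix.transpose_mul, Matrix.transpose_transpose]
  have hps0 : ∀ i, 0 ≤ PS i i := by
    intro i
    rw [hPS, Matrix.mul_apply]
    exact Finset.sum_nonneg fun k _ => mul_self_nonneg _
  have hps1 : ∀ i, PS i i ≤ 1 := by
    intro i
    have hsymm : ∀ a b, PS a b = PS b a := by
      intro a b
      conv_lhs => rw [← hPSsym]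
      rfl
    have h1 : PS i i = ∑ k, PS i k * PS i k := by
      conv_lhs => rw [← hPSidem]
      rw [Matrix.mul_apply]
      refine Finset.sum_congr rfl fun k _ => ?_
      rw [hsymm k i]
    have h2 : PS i i * PS i i ≤ ∑ k, PS i k * PS i k :=
      Finset.single_le_sum (f := fun k => PS i k * PS i k)
        (fun k _ => mul_self_nonneg _) (Finset.mem_univ i)
    nlinarith [h1, h2]
  have hpssum : ∑ i, PS i i = ((2 * r : ℕ) : ℝ) := by
    have ht : ∑ i, PS i i = PS.trace := rfl
    rw [ht, hPS, Matrix.trace_mul_comm, hWW, Matrix.trace_one]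
    simp [Fintype.card_sum]
    push_cast
    ring
  have h2rm : 2 * r ≤ m := le_trans h2r (min_le_left m n)
  set c : ℕ → ℝ := fun j => if h : j < m then PS ⟨j, h⟩ ⟨j, h⟩ else 0 with hc
  have hsum_c : ∑ j ∈ Finset.range m, c j = ((2 * r : ℕ) : ℝ) := by
    rw [← Fin.sum_univ_eq_sum_range c m, ← hpssum]
    refine Finset.sum_congr rfl fun i _ => ?_
    rw [hc]
    simp [i.isLt]
  have hfinal : ∑ i : Fin m, σ (i : ℕ) ^ 2 * PS i i ≤ S := by
    have hct := ctrick (k := 2 * r) (M := m) (by omega) h2rm (fun i => σ i ^ 2) c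
      (fun i => sq_nonneg _)
      (fun i j hij => pow_le_pow_left₀ (hσnonneg j) (hσmono i j hij) 2)
      (fun i => by
        by_cases h : i < m
        · simp only [hc, dif_pos h]; exact hps0 _
        · simp only [hc, dif_neg h]; exact le_refl 0)
      (fun i => by
        by_cases h : i < m
        · simp only [hc, dif_pos h]; exact hps1 _
        · simp only [hc, dif_neg h]; exact zero_le_one)
      (le_of_eq hsum_c)
    rw [hSdef]
    refine le_trans (le_of_eq ?_) hct
    rw [← Fin.sum_univ_eq_sum_range (fun j => c j * σ j ^ 2) m]
    refine Finset.sum_congr rfl fun i _ => ?_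
    rw [hc]
    simp [i.isLt]
    ring
  have hkey3 : frobSq (Q * Qᵀ * G) ≤ S := by
    rw [e1, e2, trace_diagonal_mul]
    exact hfinal
  have hCS := frobInner_sq_le (Q * Qᵀ * G) P
  rw [key2] at hCS
  have hp0 := frobSq_nonneg P
  have hq0 := frobSq_nonneg (Q * Qᵀ * G)
  nlinarith [mul_le_mul_of_nonneg_right hkey3 hp0]


lemma colBlock_orth {N r off : ℕ} (U : Matrix (Fin N) (Fin N) ℝ) (hU : Uᵀ * U = 1)
    (h : off + r ≤ N) : (colBlock U off r h)ᵀ * colBlock U off r h = 1 := by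
  ext j j'
  rw [Matrix.mul_apply, Matrix.one_apply]
  have h1 : (Uᵀ * U) ⟨off + (j : ℕ), by omega⟩ ⟨off + (j' : ℕ), by omega⟩
      = (1 : Matrix (Fin N) (Fin N) ℝ) ⟨off + (j : ℕ), by omega⟩ ⟨off + (j' : ℕ), by omega⟩ := by
    rw [hU]
  rw [Matrix.mul_apply, Matrix.one_apply] at h1
  have h2 : ∑ i, (colBlock U off r h)ᵀ j i * colBlock U off r h i j'
      = ∑ i, Uᵀ (⟨off + (j : ℕ), by omega⟩ : Fin N) i * U i ⟨off + (j' : ℕ), by omega⟩ :=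
    Finset.sum_congr rfl fun i _ => rfl
  rw [h2, h1]
  congr 1
  simp [Fin.ext_iff]

lemma colBlock_proj {N r off : ℕ} (U : Matrix (Fin N) (Fin N) ℝ) (hU : Uᵀ * U = 1)
    (h : off + r ≤ N) :
    colBlock U off r h * (colBlock U off r h)ᵀ * U
      = U * Matrix.diagonal
          (fun k : Fin N => if off ≤ (k : ℕ) ∧ (k : ℕ) < off + r then (1 : ℝ) else 0) := by
  set AL := colBlock U off r h with hALdef
  ext i k
  rw [Matrix.mul_apply, Matrix.mul_diagonal]
  have step1 : ∑ l, (AL * ALᵀ) i l * U l k = ∑ j : Fin r, AL i j * ∑ l, AL l j * U l k := by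
    simp only [Matrix.mul_apply, Matrix.transpose_apply, Finset.sum_mul]
    rw [Finset.sum_comm]
    refine Finset.sum_congr rfl fun j _ => ?_
    rw [Finset.mul_sum]
    refine Finset.sum_congr rfl fun l _ => by ring
  rw [step1]
  have step2 : ∀ j : Fin r, (∑ l, AL l j * U l k)
      = if ((⟨off + (j : ℕ), by omega⟩ : Fin N) = k) then 1 else 0 := by
    intro j
    have h1 : (Uᵀ * U) ⟨off + (j : ℕ), by omega⟩ k
        = (1 : Matrix (Fin N) (Fin N) ℝ) ⟨off + (j : ℕ), by omega⟩ k := by rw [hU]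
    rw [Matrix.mul_apply, Matrix.one_apply] at h1
    rw [← h1]
    exact Finset.sum_congr rfl fun l _ => rfl
  simp only [step2]
  by_cases hk : off ≤ (k : ℕ) ∧ (k : ℕ) < off + r
  · rw [if_pos hk, mul_one]
    rw [Finset.sum_eq_single (⟨(k : ℕ) - off, by omega⟩ : Fin r)]
    · have he : ((⟨off + ((k : ℕ) - off), by omega⟩ : Fin N) = k) := Fin.ext (by simp; omega)
      rw [if_pos he, mul_one]
      show U i (⟨off + ((k : ℕ) - off), by omega⟩ : Fin N) = U i k
      rw [he]
    · intro b _ hb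
      have hne : ((⟨off + (b : ℕ), by omega⟩ : Fin N) ≠ k) := by
        intro hc
        apply hb
        apply Fin.ext
        have hval : off + (b : ℕ) = (k : ℕ) := congrArg Fin.val hc
        show (b : ℕ) = (k : ℕ) - off
        omega
      rw [if_neg hne, mul_zero]
    · intro hmem
      exact absurd (Finset.mem_univ _) hmem
  · rw [if_neg hk, mul_zero]
    refine Finset.sum_eq_zero fun j _ => ?_
    have hne : ((⟨off + (j : ℕ), by omega⟩ : Fin N) ≠ k) := by
      intro hc
      have hval : off + (j : ℕ) = (k : ℕ) := congrArg Fin.val hc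
      omega
    rw [if_neg hne, mul_zero]

lemma frobSq_conj {m n : ℕ} (U : Matrix (Fin m) (Fin m) ℝ) (V : Matrix (Fin n) (Fin n) ℝ)
    (hU : Uᵀ * U = 1) (hV : Vᵀ * V = 1) (X : Matrix (Fin m) (Fin n) ℝ) :
    frobSq (U * X * Vᵀ) = frobSq X := by
  unfold frobSq
  simp only [Matrix.transpose_mul, Matrix.transpose_transpose, Matrix.mul_assoc]
  rw [← Matrix.mul_assoc Uᵀ U, hU, Matrix.one_mul, Matrix.trace_mul_comm]
  simp only [Matrix.mul_assoc]
  rw [hV, Matrix.mul_one]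

lemma frobSq_svdDiag {m n : ℕ} (σ : ℕ → ℝ) (hσzero : ∀ i, min m n ≤ i → σ i = 0) :
    frobSq (svdDiag m n σ) = ∑ i ∈ Finset.range (min m n), σ i ^ 2 := by
  rw [frobSq_eq_sum]
  have hcol : ∀ j : Fin n, (∑ i : Fin m, (svdDiag m n σ) i j ^ 2)
      = (if (j : ℕ) < m then σ (j : ℕ) ^ 2 else 0) := by
    intro j
    by_cases hj : (j : ℕ) < m
    · rw [if_pos hj, Finset.sum_eq_single (⟨(j : ℕ), hj⟩ : Fin m)]
      · simp [svdDiag]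
      · intro b _ hb
        have : (b : ℕ) ≠ (j : ℕ) := fun hc => hb (Fin.ext hc)
        simp [svdDiag, this]
      · intro hmem; exact absurd (Finset.mem_univ _) hmem
    · rw [if_neg hj]
      refine Finset.sum_eq_zero fun i _ => ?_
      have : (i : ℕ) ≠ (j : ℕ) := by have := i.isLt; omega
      simp [svdDiag, this]
  rw [Finset.sum_congr rfl fun j _ => hcol j]
  rw [Fin.sum_univ_eq_sum_range (fun j => if j < m then σ j ^ 2 else 0) n]
  have hsplit := Finset.sum_range_add_sum_Ico (fun j => if j < m then σ j ^ 2 else 0)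
    (min_le_right m n)
  have h2 : ∑ j ∈ Finset.Ico (min m n) n, (if j < m then σ j ^ 2 else 0) = 0 := by
    refine Finset.sum_eq_zero fun j hj => ?_
    have hjm := (Finset.mem_Ico.mp hj).1
    by_cases hjm' : j < m
    · rw [if_pos hjm', hσzero j hjm]; ring
    · rw [if_neg hjm']
  have h3 : ∑ j ∈ Finset.range (min m n), (if j < m then σ j ^ 2 else 0)
      = ∑ j ∈ Finset.range (min m n), σ j ^ 2 := by
    refine Finset.sum_congr rfl fun j hj => ?_
    have := Finset.mem_range.mp hj
    rw [if_pos (by omega)]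
  linarith

lemma sub_projT {m n r : ℕ} (AL : Matrix (Fin m) (Fin r) ℝ) (BR : Matrix (Fin n) (Fin r) ℝ)
    (G : Matrix (Fin m) (Fin n) ℝ) :
    G - projT AL BR G = (1 - AL * ALᵀ) * G * (1 - BR * BRᵀ) := by
  unfold projT
  abel

lemma diag_one_sub {N : ℕ} (f : Fin N → ℝ) :
    Matrix.diagonal (fun k => 1 - f k) = 1 - Matrix.diagonal f := by
  rw [← Matrix.diagonal_one, ← Matrix.diagonal_sub]

lemma residual_eq {m n r : ℕ} (h2rm : 2 * r ≤ m) (h2rn : 2 * r ≤ n)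
    (hAm : 0 + r ≤ m) (hBn : r + r ≤ n)
    (U : Matrix (Fin m) (Fin m) ℝ) (V : Matrix (Fin n) (Fin n) ℝ) (σ : ℕ → ℝ)
    (hU : Uᵀ * U = 1) (hV : Vᵀ * V = 1) :
    (1 - colBlock U 0 r hAm * (colBlock U 0 r hAm)ᵀ) * (U * svdDiag m n σ * Vᵀ)
        * (1 - colBlock V r r hBn * (colBlock V r r hBn)ᵀ)
      = U * svdDiag m n (fun i => if 2 * r ≤ i then σ i else 0) * Vᵀ := by
  set AL := colBlock U 0 r hAm with hALd
  set BR := colBlock V r r hBn with hBRd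
  set f₁ : Fin m → ℝ := fun k => if 0 ≤ (k : ℕ) ∧ (k : ℕ) < 0 + r then 1 else 0 with hf₁
  set f₂ : Fin n → ℝ := fun k => if r ≤ (k : ℕ) ∧ (k : ℕ) < r + r then 1 else 0 with hf₂
  have hPAU : AL * ALᵀ * U = U * Matrix.diagonal f₁ := colBlock_proj U hU hAm
  have hPBV : BR * BRᵀ * V = V * Matrix.diagonal f₂ := colBlock_proj V hV hBn
  have hL : (1 - AL * ALᵀ) * U = U * Matrix.diagonal (fun k => 1 - f₁ k) := by
    rw [Matrix.sub_mul, Matrix.one_mul, hPAU, diag_one_sub, Matrix.mul_sub, Matrix.mul_one]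
  have hR : Vᵀ * (1 - BR * BRᵀ) = Matrix.diagonal (fun k => 1 - f₂ k) * Vᵀ := by
    have hsym : (BR * BRᵀ)ᵀ = BR * BRᵀ := by
      rw [Matrix.transpose_mul, Matrix.transpose_transpose]
    calc Vᵀ * (1 - BR * BRᵀ) = ((1 - BR * BRᵀ)ᵀ * V)ᵀ := by
          rw [Matrix.transpose_mul, Matrix.transpose_transpose]
      _ = ((1 - BR * BRᵀ) * V)ᵀ := by
          rw [Matrix.transpose_sub, Matrix.transpose_one, hsym]
      _ = (V * Matrix.diagonal (fun k => 1 - f₂ k))ᵀ := by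
          rw [Matrix.sub_mul, Matrix.one_mul, hPBV, diag_one_sub, Matrix.mul_sub, Matrix.mul_one]
      _ = Matrix.diagonal (fun k => 1 - f₂ k) * Vᵀ := by
          rw [Matrix.transpose_mul, Matrix.diagonal_transpose]
  have hmid : Matrix.diagonal (fun k => 1 - f₁ k) * svdDiag m n σ
        * Matrix.diagonal (fun k => 1 - f₂ k)
      = svdDiag m n (fun i => if 2 * r ≤ i then σ i else 0) := by
    ext i j
    rw [Matrix.mul_diagonal, Matrix.diagonal_mul]
    simp only [svdDiag, hf₁, hf₂]
    split_ifs <;> first | ring1 | (exfalso; omega)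
  calc (1 - AL * ALᵀ) * (U * svdDiag m n σ * Vᵀ) * (1 - BR * BRᵀ)
      = ((1 - AL * ALᵀ) * U) * (svdDiag m n σ * (Vᵀ * (1 - BR * BRᵀ))) := by
        simp only [Matrix.mul_assoc]
    _ = (U * Matrix.diagonal (fun k => 1 - f₁ k))
        * (svdDiag m n σ * (Matrix.diagonal (fun k => 1 - f₂ k) * Vᵀ)) := by
        rw [hL, hR]
    _ = U * (Matrix.diagonal (fun k => 1 - f₁ k) * svdDiag m n σ
        * Matrix.diagonal (fun k => 1 - f₂ k)) * Vᵀ := by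
        simp only [Matrix.mul_assoc]
    _ = U * svdDiag m n (fun i => if 2 * r ≤ i then σ i else 0) * Vᵀ := by rw [hmid]

end AuxTPX

/-- The minimum over `ΔW ∈ M_r` of `‖G − P_{T_{ΔW}} G‖_F²` equals
`Σ_{i>2r} σᵢ²`, and equivalently the maximum over `ΔW ∈ M_r` of `‖P_{T_{ΔW}} G‖_F²` equals
`σ₁² + … + σ_{2r}²`. -/
theorem tangent_projection_extremal_values
    {m n r : ℕ} (hm : 0 < m) (hn : 0 < n) (hr : 0 < r) (h2r : 2 * r ≤ min m n)
    (G : Matrix (Fin m) (Fin n) ℝ)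
    (U : Matrix (Fin m) (Fin m) ℝ) (V : Matrix (Fin n) (Fin n) ℝ) (σ : ℕ → ℝ)
    (hU : Uᵀ * U = 1) (hV : Vᵀ * V = 1)
    (hσmono : ∀ i j : ℕ, i ≤ j → σ j ≤ σ i)
    (hσnonneg : ∀ i, 0 ≤ σ i)
    (hσzero : ∀ i, min m n ≤ i → σ i = 0)
    (hG : G = U * svdDiag m n σ * Vᵀ) :
    IsLeast {v : ℝ | ∃ ΔW ∈ Mrank m n r,
        ∃ AL : Matrix (Fin m) (Fin r) ℝ, ∃ BR : Matrix (Fin n) (Fin r) ℝ,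
          IsONFact ΔW AL BR ∧ v = frobSq (G - projT AL BR G)}
      (∑ i ∈ Finset.Ico (2 * r) (min m n), σ i ^ 2) ∧
    IsGreatest {v : ℝ | ∃ ΔW ∈ Mrank m n r,
        ∃ AL : Matrix (Fin m) (Fin r) ℝ, ∃ BR : Matrix (Fin n) (Fin r) ℝ,
          IsONFact ΔW AL BR ∧ v = frobSq (projT AL BR G)}
      (∑ i ∈ Finset.range (2 * r), σ i ^ 2) := by
  have h2rm : 2 * r ≤ m := le_trans h2r (min_le_left m n)
  have h2rn : 2 * r ≤ n := le_trans h2r (min_le_right m n)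
  have hAm : 0 + r ≤ m := by omega
  have hBn : r + r ≤ n := by omega
  have htot : frobSq G = ∑ i ∈ Finset.range (min m n), σ i ^ 2 := by
    rw [hG, frobSq_conj U V hU hV, frobSq_svdDiag σ hσzero]
  have hsplitsum : ∑ i ∈ Finset.range (2 * r), σ i ^ 2
        + ∑ i ∈ Finset.Ico (2 * r) (min m n), σ i ^ 2
      = ∑ i ∈ Finset.range (min m n), σ i ^ 2 :=
    Finset.sum_range_add_sum_Ico _ h2r
  set AL0 := colBlock U 0 r hAm with hAL0
  set BR0 := colBlock V r r hBn with hBR0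
  have hALo : AL0ᵀ * AL0 = 1 := colBlock_orth U hU hAm
  have hBRo : BR0ᵀ * BR0 = 1 := colBlock_orth V hV hBn
  set ΔW := AL0 * BR0ᵀ with hΔW
  have hrank : ΔW ∈ Mrank m n r := by
    have hle : ΔW.rank ≤ r := le_trans (Matrix.rank_mul_le_left _ _)
      (by simpa using Matrix.rank_le_card_width AL0)
    have h1 : AL0ᵀ * (ΔW * BR0) = 1 := by
      rw [hΔW, Matrix.mul_assoc AL0 BR0ᵀ BR0, hBRo, Matrix.mul_one, hALo]
    have hge : r ≤ ΔW.rank := by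
      have hro : ((1 : Matrix (Fin r) (Fin r) ℝ)).rank = r := by
        simp [Matrix.rank_one]
      calc r = ((1 : Matrix (Fin r) (Fin r) ℝ)).rank := hro.symm
        _ = (AL0ᵀ * (ΔW * BR0)).rank := by rw [h1]
        _ ≤ (ΔW * BR0).rank := Matrix.rank_mul_le_right _ _
        _ ≤ ΔW.rank := Matrix.rank_mul_le_left _ _
    exact le_antisymm hle hge
  have hfact : IsONFact ΔW AL0 BR0 := ⟨hALo, hBRo, ⟨BR0, rfl⟩, ⟨AL0, rfl⟩⟩
  have hres : G - projT AL0 BR0 G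
      = U * svdDiag m n (fun i => if 2 * r ≤ i then σ i else 0) * Vᵀ := by
    rw [sub_projT, hG, hAL0, hBR0, residual_eq h2rm h2rn hAm hBn U V σ hU hV]
  have hσzero' : ∀ i, min m n ≤ i → (if 2 * r ≤ i then σ i else 0) = 0 := by
    intro i hi
    split_ifs
    · exact hσzero i hi
    · rfl
  have hresval : frobSq (G - projT AL0 BR0 G)
      = ∑ i ∈ Finset.Ico (2 * r) (min m n), σ i ^ 2 := by
    rw [hres, frobSq_conj U V hU hV, frobSq_svdDiag _ hσzero']
    rw [← Finset.sum_range_add_sum_Ico (fun i => (if 2 * r ≤ i then σ i else 0) ^ 2) h2r]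
    have hz : ∑ i ∈ Finset.range (2 * r), (if 2 * r ≤ i then σ i else 0) ^ 2 = 0 :=
      Finset.sum_eq_zero fun i hi => by
        rw [if_neg (by have := Finset.mem_range.mp hi; omega)]
        ring
    rw [hz, zero_add]
    exact Finset.sum_congr rfl fun i hi => by rw [if_pos (Finset.mem_Ico.mp hi).1]
  have hsub0 : frobSq (G - projT AL0 BR0 G) = frobSq G - frobSq (projT AL0 BR0 G) := by
    rw [frobSq_sub, frobInner_projT AL0 BR0 G hALo hBRo]
    ring
  have hprojval : frobSq (projT AL0 BR0 G) = ∑ i ∈ Finset.range (2 * r), σ i ^ 2 := by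
    linarith [htot, hsplitsum, hsub0, hresval]
  constructor
  · constructor
    · exact ⟨ΔW, hrank, AL0, BR0, hfact, hresval.symm⟩
    · rintro v ⟨W1, hW1, AL, BR, ⟨hALo', hBRo', -, -⟩, rfl⟩
      have hb := kyfan_bound hr h2r U V σ hU hV hσmono hσnonneg hσzero AL BR hALo' hBRo'
      rw [← hG] at hb
      have hsub' : frobSq (G - projT AL BR G) = frobSq G - frobSq (projT AL BR G) := by
        rw [frobSq_sub, frobInner_projT AL BR G hALo' hBRo']
        ring
      linarith [htot, hsplitsum, hsub', hb]
  · constructor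
    · exact ⟨ΔW, hrank, AL0, BR0, hfact, hprojval.symm⟩
    · rintro v ⟨W1, hW1, AL, BR, ⟨hALo', hBRo', -, -⟩, rfl⟩
      have hb := kyfan_bound hr h2r U V σ hU hV hσmono hσnonneg hσzero AL BR hALo' hBRo'
      rw [← hG] at hb
      exact hb
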